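/- Suppose F ⊆ S_n is a t-cycle-intersecting family that is fixed. Then fix(F) = {fix(σ) : σ ∈ F} is a t-intersecting family of subsets of [n]. -/

import Mathlib

open Equiv Finset
open scoped Classical

noncomputable section

/-- A common cycle of two permutations `σ` and `π`: a nonempty subset `B` invariant
under both, on which they agree, and on which `σ` acts as a single cycle. -/
def IsCommonCycle {n : ℕ} (σ π : Equiv.Perm (Fin n)) (B : Finset (Fin n)) : Prop :=
  B.Nonempty ∧ (∀ x ∈ B, σ x ∈ B) ∧ (∀ x ∈ B, π x ∈ B) ∧
  (∀ x ∈ B, σ x = π x) ∧ (∀ x ∈ B, ∀ y ∈ B, σ.SameCycle x y)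

/-- A family of permutations is `t`-cycle-intersecting if any two of its members
have at least `t` common cycles on pairwise disjoint subsets. -/
def TCycleIntersecting {n : ℕ} (t : ℕ) (F : Set (Equiv.Perm (Fin n))) : Prop :=
  ∀ σ ∈ F, ∀ π ∈ F, ∃ 𝒞 : Finset (Finset (Fin n)),
    t ≤ 𝒞.card ∧ (∀ B ∈ 𝒞, IsCommonCycle σ π B) ∧
    (𝒞 : Set (Finset (Fin n))).Pairwise fun A B => Disjoint A B

/-- The `ij`-fixing of a permutation: if `σ i = j` then make `i` a fixed point and
send `σ⁻¹ i` to `j`, leaving everything else unchanged. -/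
def ijFix {n : ℕ} (i j : Fin n) (σ : Equiv.Perm (Fin n)) : Equiv.Perm (Fin n) :=
  if σ i = j then σ * Equiv.swap i (σ⁻¹ i) else σ

/-- The `ij`-fixing operation on a family of permutations. -/
def fixFamOp {n : ℕ} (i j : Fin n) (A : Set (Equiv.Perm (Fin n))) :
    Set (Equiv.Perm (Fin n)) :=
  (fun σ => if ijFix i j σ ∈ A then σ else ijFix i j σ) '' A

/-- A family is fixed if it is closed under all `ij`-fixing operations. -/
def IsFixedFam {n : ℕ} (A : Set (Equiv.Perm (Fin n))) : Prop :=
  ∀ i j : Fin n, i ≠ j → fixFamOp i j A = A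

/-- The `(i,j)`-compression of a permutation: if `σ i ≠ i` and `σ j = j`, then
fix `i`, send `j` to `σ i` and `σ⁻¹ i` to `j`; otherwise leave `σ` unchanged. -/
def compPerm {n : ℕ} (i j : Fin n) (σ : Equiv.Perm (Fin n)) : Equiv.Perm (Fin n) :=
  if σ i ≠ i ∧ σ j = j then (Equiv.swap i (σ i) * Equiv.swap i j) * σ else σ

/-- The `(i,j)`-compression operation on a family of permutations. -/
def compFam {n : ℕ} (i j : Fin n) (A : Set (Equiv.Perm (Fin n))) :
    Set (Equiv.Perm (Fin n)) :=
  (fun σ => if compPerm i j σ ∈ A then σ else compPerm i j σ) '' A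

/-- A family is compressed if it is closed under all `(i,j)`-compressions. -/
def IsCompressedFam {n : ℕ} (A : Set (Equiv.Perm (Fin n))) : Prop :=
  ∀ i j : Fin n, i < j → compFam i j A = A

/-- `F` is the stabilizer of `t` points: there are `t` distinct points such that `F`
consists exactly of the permutations fixing all of them. -/
def IsTPointStabilizer {n : ℕ} (t : ℕ) (F : Set (Equiv.Perm (Fin n))) : Prop :=
  ∃ a : Fin t ↪ Fin n, F = {σ | ∀ k, σ (a k) = a k}

/-- The set of fixed points of a permutation. -/
def fixSet {n : ℕ} (σ : Equiv.Perm (Fin n)) : Finset (Fin n) :=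
  Finset.univ.filter fun x => σ x = x

/-- The up-permutation of a set `B`: all permutations fixing every element of `B`. -/
def UpSet {n : ℕ} (B : Finset (Fin n)) : Set (Equiv.Perm (Fin n)) :=
  {σ | ∀ x ∈ B, σ x = x}

/-- The up-permutation of a collection of sets. -/
def UpFam {n : ℕ} (g : Set (Finset (Fin n))) : Set (Equiv.Perm (Fin n)) :=
  ⋃ B ∈ g, UpSet B

/-- `g` is a generating set for `F`: it contains no set of size `n-1` and
`Up(g) = F`. -/
def IsGenSet {n : ℕ} (g : Set (Finset (Fin n))) (F : Set (Equiv.Perm (Fin n))) : Prop :=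
  (∀ B ∈ g, B.card ≠ n - 1) ∧ UpFam g = F

/-- `s⁺(B)`: the largest element of `B`, in the 1-based numbering of `[n] = {1,…,n}`
(so `s⁺(∅) = 0`). -/
def sPlus {n : ℕ} (B : Finset (Fin n)) : ℕ := B.sup fun x => (x : ℕ) + 1

/-- `s⁺(g) = max {s⁺(B) : B ∈ g}`. -/
def sPlusFam {n : ℕ} (g : Set (Finset (Fin n))) : ℕ := sSup (sPlus '' g)

/-- `s_min(G(F)) = min {s⁺(g) : g a generating set of F}`. -/
def sMin {n : ℕ} (F : Set (Equiv.Perm (Fin n))) : ℕ :=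
  sInf (sPlusFam '' {g | IsGenSet g F})

/-- `L(B)`: all sets obtained from `B` by left-shifting, i.e. sets of the same size
whose `i`-th smallest element is at most the `i`-th smallest element of `B`. -/
def LSet {n : ℕ} (B : Finset (Fin n)) : Set (Finset (Fin n)) :=
  {A | ∃ h : A.card = B.card, ∀ i : Fin B.card,
      A.orderEmbOfFin h i ≤ B.orderEmbOfFin rfl i}

/-- `L(g) = ⋃_{B ∈ g} L(B)`. -/
def LFam {n : ℕ} (g : Set (Finset (Fin n))) : Set (Finset (Fin n)) :=
  ⋃ B ∈ g, LSet B

/-- `L_*(g)`: the minimal (under inclusion) elements of `L(g)`. -/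
def Lstar {n : ℕ} (g : Set (Finset (Fin n))) : Set (Finset (Fin n)) :=
  {A | A ∈ LFam g ∧ ∀ A' ∈ LFam g, A' ⊆ A → A' = A}

/-- The interval `[m] = {1,…,m}` inside `Fin n` (1-based). -/
def Ival (n m : ℕ) : Finset (Fin n) := Finset.univ.filter fun x => (x : ℕ) < m

/-- `D(E) = {σ : fix(σ) ∩ [s⁺(E)] = E}`. -/
def DSet {n : ℕ} (E : Finset (Fin n)) : Set (Equiv.Perm (Fin n)) :=
  {σ | fixSet σ ∩ Ival n (sPlus E) = E}


lemma mem_of_inv' {n : ℕ} (σ : Equiv.Perm (Fin n)) (B : Finset (Fin n))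
    (hB : ∀ x ∈ B, σ x ∈ B) : ∀ y ∈ B, σ⁻¹ y ∈ B := by
  intro y hy
  have himg : B.image σ = B := by
    apply Finset.eq_of_subset_of_card_le
    · intro z hz
      obtain ⟨x, hx, rfl⟩ := Finset.mem_image.mp hz
      exact hB x hx
    · rw [Finset.card_image_of_injective _ σ.injective]
  rw [← himg] at hy
  obtain ⟨x, hx, hxe⟩ := Finset.mem_image.mp hy
  have hx' : σ⁻¹ y = x := by rw [← hxe]; simp
  rwa [hx']

lemma zpow_mem' {n : ℕ} (σ : Equiv.Perm (Fin n)) (B : Finset (Fin n))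
    (hB : ∀ x ∈ B, σ x ∈ B) : ∀ k : ℤ, ∀ y ∈ B, (σ ^ k) y ∈ B := by
  intro k
  induction k using Int.induction_on with
  | zero => simp
  | succ i ih =>
    intro y hy
    rw [zpow_add_one, Equiv.Perm.mul_apply]
    exact ih _ (hB y hy)
  | pred i ih =>
    intro y hy
    rw [zpow_sub_one, Equiv.Perm.mul_apply]
    exact ih _ (mem_of_inv' σ B hB y hy)

lemma fixed_mem' {n : ℕ} {F : Set (Equiv.Perm (Fin n))} (hfix : IsFixedFam F)
    {i j : Fin n} (hij : i ≠ j) {σ : Equiv.Perm (Fin n)} (hσ : σ ∈ F) :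
    ijFix i j σ ∈ F := by
  by_cases hc : ijFix i j σ ∈ F
  · exact hc
  · have h1 : ijFix i j σ ∈ fixFamOp i j F := ⟨σ, hσ, by simp [hc]⟩
    rw [hfix i j hij] at h1
    exact h1

lemma collapse' {n : ℕ} {F : Set (Equiv.Perm (Fin n))} (hfix : IsFixedFam F) :
    ∀ N : ℕ, ∀ σ ∈ F, ∀ B : Finset (Fin n), (∀ x ∈ B, σ x ∈ B) →
      (B.filter fun x => σ x ≠ x).card ≤ N →
      ∃ ρ ∈ F, (∀ x ∈ B, ρ x = x) ∧ ∀ x ∉ B, ρ x = σ x := by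
  intro N
  induction N with
  | zero =>
    intro σ hσ B hB hcard
    refine ⟨σ, hσ, ?_, fun x _ => rfl⟩
    intro x hx
    by_contra hne
    have hm : x ∈ B.filter fun x => σ x ≠ x := Finset.mem_filter.mpr ⟨hx, hne⟩
    have := Finset.card_pos.mpr ⟨x, hm⟩
    omega
  | succ N ih =>
    intro σ hσ B hB hcard
    by_cases hemp : (B.filter fun x => σ x ≠ x) = ∅
    · refine ⟨σ, hσ, ?_, fun x _ => rfl⟩
      intro x hx
      by_contra hne
      have hm : x ∈ B.filter fun x => σ x ≠ x := Finset.mem_filter.mpr ⟨hx, hne⟩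
      rw [hemp] at hm
      exact absurd hm (Finset.notMem_empty x)
    · obtain ⟨i, hi⟩ := Finset.nonempty_iff_ne_empty.mpr hemp
      obtain ⟨hiB, hiσ⟩ := Finset.mem_filter.mp hi
      set τ := ijFix i (σ i) σ with hτdef
      have hτ : τ = σ * Equiv.swap i (σ⁻¹ i) := by rw [hτdef, ijFix, if_pos rfl]
      have hτF : τ ∈ F := fixed_mem' hfix (Ne.symm hiσ) hσ
      have hinvI : σ⁻¹ i ∈ B := mem_of_inv' σ B hB i hiB
      have hiinv : σ⁻¹ i ≠ i := fun h => hiσ (by conv_lhs => rw [← h]; simp)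
      have hτi : τ i = i := by
        rw [hτ, Equiv.Perm.mul_apply, Equiv.swap_apply_left]; simp
      have hτinv : τ (σ⁻¹ i) = σ i := by
        rw [hτ, Equiv.Perm.mul_apply, Equiv.swap_apply_right]
      have hτother : ∀ x, x ≠ i → x ≠ σ⁻¹ i → τ x = σ x := by
        intro x h1 h2
        rw [hτ, Equiv.Perm.mul_apply, Equiv.swap_apply_of_ne_of_ne h1 h2]
      have hBτ : ∀ x ∈ B, τ x ∈ B := by
        intro x hx
        by_cases h1 : x = i
        · rw [h1, hτi]; exact hiB
        · by_cases h2 : x = σ⁻¹ i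
          · rw [h2, hτinv]; exact hB i hiB
          · rw [hτother x h1 h2]; exact hB x hx
      have hsub : (B.filter fun x => τ x ≠ x) ⊆ (B.filter fun x => σ x ≠ x).erase i := by
        intro x hx
        obtain ⟨hxB, hxτ⟩ := Finset.mem_filter.mp hx
        have h1 : x ≠ i := fun h => hxτ (h ▸ hτi)
        refine Finset.mem_erase.mpr ⟨h1, Finset.mem_filter.mpr ⟨hxB, ?_⟩⟩
        by_cases h2 : x = σ⁻¹ i
        · rw [h2]
          intro h
          exact hiinv (by conv_lhs => rw [← h]; simp)
        · rw [← hτother x h1 h2]; exact hxτ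
      have hcard2 : (B.filter fun x => τ x ≠ x).card ≤ N := by
        have h1 := Finset.card_le_card hsub
        have h2 := Finset.card_erase_of_mem hi
        have h3 := Finset.card_pos.mpr ⟨i, hi⟩
        omega
      obtain ⟨ρ, hρF, hρB, hρout⟩ := ih τ hτF B hBτ hcard2
      refine ⟨ρ, hρF, hρB, ?_⟩
      intro x hx
      have h1 : x ≠ i := fun h => hx (h ▸ hiB)
      have h2 : x ≠ σ⁻¹ i := fun h => hx (h ▸ hinvI)
      rw [hρout x hx, hτother x h1 h2]

/-- If `F` is a fixed `t`-cycle-intersecting family, then the collection of fixed-point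
sets of members of `F` is a `t`-intersecting family of subsets of `[n]`. -/
theorem stmt2 {n t : ℕ} (F : Set (Equiv.Perm (Fin n)))
    (hF : TCycleIntersecting t F) (hfix : IsFixedFam F) :
    ∀ A ∈ fixSet '' F, ∀ B ∈ fixSet '' F, t ≤ (A ∩ B).card := by
  intro A hA B0 hB0
  obtain ⟨σ, hσ, rfl⟩ := hA
  obtain ⟨π, hπ, rfl⟩ := hB0
  -- T: union of nontrivial π-cycles all of whose points are moved by σ
  set T : Finset (Fin n) :=
    Finset.univ.filter fun x => π x ≠ x ∧ ∀ y, π.SameCycle x y → σ y ≠ y with hTdef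
  have hmemT : ∀ x, x ∈ T ↔ (π x ≠ x ∧ ∀ y, π.SameCycle x y → σ y ≠ y) := by
    intro x; simp [hTdef]
  have hTmoved : ∀ x ∈ T, σ x ≠ x := by
    intro x hx
    exact ((hmemT x).mp hx).2 x (Equiv.Perm.SameCycle.refl π x)
  have hTinv : ∀ x ∈ T, π x ∈ T := by
    intro x hx
    obtain ⟨h1, h2⟩ := (hmemT x).mp hx
    refine (hmemT (π x)).mpr ⟨fun h => h1 (π.injective h), ?_⟩
    intro y hy
    have hxy : π.SameCycle x (π x) := (Equiv.Perm.sameCycle_apply_right).mpr (Equiv.Perm.SameCycle.refl π x)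
    exact h2 y (hxy.trans hy)
  obtain ⟨ρ, hρF, hρT, hρout⟩ :=
    collapse' hfix ((T.filter fun x => π x ≠ x).card) π hπ T hTinv le_rfl
  obtain ⟨𝒞, hcard, hcyc, hpair⟩ := hF σ hσ ρ hρF
  -- fixed point helper: if σ y = y and σ.SameCycle y z then z = y
  have hfixcyc : ∀ (g : Equiv.Perm (Fin n)) (y z : Fin n), g y = y → g.SameCycle y z → z = y := by
    intro g y z hy ⟨k, hk⟩
    have : (g ^ k) y ∈ ({y} : Finset (Fin n)) := by
      apply zpow_mem' g {y} _ k y (Finset.mem_singleton_self y)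
      intro a ha
      rw [Finset.mem_singleton.mp ha, Finset.mem_singleton, hy]
    rw [hk] at this
    exact Finset.mem_singleton.mp this
  have hsub : ∀ C ∈ 𝒞, C ⊆ fixSet σ ∩ fixSet π := by
    intro C hC
    obtain ⟨hne, hσinv, hρinv, hagree, hsc⟩ := hcyc C hC
    -- first: every point of C is fixed by σ
    have hall : ∀ x ∈ C, σ x = x := by
      by_contra hcon
      push_neg at hcon
      obtain ⟨x, hxC, hxσ⟩ := hcon
      have hmovedC : ∀ y ∈ C, σ y ≠ y := by
        intro y hy hyfix
        have := hfixcyc σ y x hyfix ((hsc x hxC y hy).symm)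
        exact hxσ (this ▸ hyfix)
      have hnotT : ∀ y ∈ C, y ∉ T := by
        intro y hy hyT
        exact hmovedC y hy (by rw [hagree y hy]; exact hρT y hyT)
      have hπeq : ∀ y ∈ C, π y = σ y := by
        intro y hy
        rw [← hρout y (hnotT y hy), hagree y hy]
      have hCπ : ∀ y ∈ C, π y ∈ C := by
        intro y hy; rw [hπeq y hy]; exact hσinv y hy
      -- x ∉ T, but π x ≠ x, so some z in π-cycle of x has σ z = z
      have hπx : π x ≠ x := by rw [hπeq x hxC]; exact hxσ
      have := hnotT x hxC
      rw [hmemT x] at this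
      push_neg at this
      obtain ⟨z, hz1, hz2⟩ := this hπx
      obtain ⟨k, hk⟩ := hz1
      have hzC : z ∈ C := hk ▸ zpow_mem' π C hCπ k x hxC
      exact hmovedC z hzC hz2
    -- then: every point of C is fixed by π
    intro x hx
    have hσx := hall x hx
    have hρx : ρ x = x := by rw [← hagree x hx]; exact hσx
    have hxT : x ∉ T := fun h => hTmoved x h hσx
    have hπx : π x = x := by rw [← hρout x hxT]; exact hρx
    simp [fixSet, hσx, hπx]
  have hdisj : ∀ x ∈ 𝒞, ∀ y ∈ 𝒞, x ≠ y → Disjoint (id x) (id y) := by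
    intro x hx y hy hxy
    exact hpair hx hy hxy
  calc t ≤ 𝒞.card := hcard
    _ = ∑ C ∈ 𝒞, 1 := by simp
    _ ≤ ∑ C ∈ 𝒞, C.card := by
        apply Finset.sum_le_sum
        intro C hC
        exact Finset.card_pos.mpr (hcyc C hC).1
    _ = (𝒞.biUnion id).card := (Finset.card_biUnion hdisj).symm
    _ ≤ (fixSet σ ∩ fixSet π).card := by
        apply Finset.card_le_card
        intro x hx
        obtain ⟨C, hC, hxC⟩ := Finset.mem_biUnion.mp hx
        exact hsub C hC hxC
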